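/- Under Łukasiewicz semantics, let A be an atomic concept and C a concept in which A does not occur, and let 𝒜 be a fuzzy ABox (a finite set of assertion axioms of the forms ⟨a:E ≥ α⟩, ⟨a:E ≤ α⟩, ⟨(a,b):R ≥ α⟩). Let 𝒜* be the ABox obtained from 𝒜 by replacing, in every concept occurring in 𝒜, every occurrence of A by C. Then 𝒜 ∪ {⟨A ⊑ C ≥ 1⟩, ⟨C ⊑ A ≥ 1⟩} is satisfiable iff 𝒜* is satisfiable; moreover the same equivalence holds for satisfiability in interpretations with finite domain. -/

import Mathlib

/-- ALC concepts over countably many atomic concepts and role names. -/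
inductive MConcept : Type where
  | atom : ℕ → MConcept
  | top  : MConcept
  | bot  : MConcept
  | conj : MConcept → MConcept → MConcept
  | disj : MConcept → MConcept → MConcept
  | neg  : MConcept → MConcept
  | all  : ℕ → MConcept → MConcept
  | ex   : ℕ → MConcept → MConcept
deriving DecidableEq

/-- Łukasiewicz t-norm. -/
def lukT (x y : ℝ) : ℝ := max (x + y - 1) 0
/-- Łukasiewicz t-conorm. -/
def lukS (x y : ℝ) : ℝ := min (x + y) 1
/-- Łukasiewicz implication. -/
def lukImp (x y : ℝ) : ℝ := min (1 - x + y) 1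

/-- A fuzzy interpretation. -/
structure Interp : Type 1 where
  Δ : Type
  nonempty : Nonempty Δ
  atom : ℕ → Δ → ℝ
  role : ℕ → Δ → Δ → ℝ
  ind : ℕ → Δ
  atom_mem : ∀ i x, atom i x ∈ Set.Icc (0:ℝ) 1
  role_mem : ∀ j x y, role j x y ∈ Set.Icc (0:ℝ) 1

/-- Value of a concept at a point under Łukasiewicz semantics. -/
noncomputable def lval (I : Interp) : MConcept → I.Δ → ℝ
  | MConcept.atom i, x => I.atom i x
  | MConcept.top, _ => 1
  | MConcept.bot, _ => 0
  | MConcept.conj C D, x => lukT (lval I C x) (lval I D x)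
  | MConcept.disj C D, x => lukS (lval I C x) (lval I D x)
  | MConcept.neg C, x => 1 - lval I C x
  | MConcept.all j C, x => ⨅ y, lukImp (I.role j x y) (lval I C y)
  | MConcept.ex j C, x => ⨆ y, lukT (I.role j x y) (lval I C y)

/-- Degree of subsumption `(C ⊑ D)^I`. -/
noncomputable def lsub (I : Interp) (C D : MConcept) : ℝ :=
  ⨅ x, lukImp (lval I C x) (lval I D x)

/-- Axioms of fuzzy knowledge bases. -/
inductive KAxiom : Type where
  | assertGE : ℕ → MConcept → ℚ → KAxiom   -- ⟨a : C ≥ α⟩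
  | assertLE : ℕ → MConcept → ℚ → KAxiom   -- ⟨a : C ≤ α⟩
  | roleGE : ℕ → ℕ → ℕ → ℚ → KAxiom        -- ⟨(a,b) : R ≥ α⟩
  | gci : MConcept → MConcept → ℚ → KAxiom -- ⟨C ⊑ D ≥ α⟩
deriving DecidableEq

/-- The rational constant of an axiom lies in `[0,1]`. -/
def axBounded : KAxiom → Prop
  | KAxiom.assertGE _ _ q => 0 ≤ q ∧ q ≤ 1
  | KAxiom.assertLE _ _ q => 0 ≤ q ∧ q ≤ 1
  | KAxiom.roleGE _ _ _ q => 0 ≤ q ∧ q ≤ 1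
  | KAxiom.gci _ _ q => 0 ≤ q ∧ q ≤ 1

/-- Satisfaction of an axiom in an interpretation. -/
def lsat (I : Interp) : KAxiom → Prop
  | KAxiom.assertGE a C q => (q : ℝ) ≤ lval I C (I.ind a)
  | KAxiom.assertLE a C q => lval I C (I.ind a) ≤ (q : ℝ)
  | KAxiom.roleGE a b j q => (q : ℝ) ≤ I.role j (I.ind a) (I.ind b)
  | KAxiom.gci C D q => (q : ℝ) ≤ lsub I C D

/-- Satisfaction of a set of axioms. -/
def lsatKB (I : Interp) (K : Finset KAxiom) : Prop := ∀ ax ∈ K, lsat I ax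

/-- Witnessed interpretation: all the relevant infima and suprema are attained. -/
def lWitnessed (I : Interp) : Prop :=
  ∀ (C D : MConcept) (j : ℕ) (x : I.Δ),
    (∃ y, lval I (MConcept.ex j C) x = lukT (I.role j x y) (lval I C y)) ∧
    (∃ y, lval I (MConcept.all j C) x = lukImp (I.role j x y) (lval I C y)) ∧
    (∃ y, lsub I C D = lukImp (lval I C y) (lval I D y))

/-- The atomic concept `A_i` occurs in a concept. -/
def occursC (i : ℕ) : MConcept → Prop
  | MConcept.atom i' => i = i'
  | MConcept.top => False
  | MConcept.bot => False
  | MConcept.conj C D => occursC i C ∨ occursC i D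
  | MConcept.disj C D => occursC i C ∨ occursC i D
  | MConcept.neg C => occursC i C
  | MConcept.all _ C => occursC i C
  | MConcept.ex _ C => occursC i C

/-- The atomic concept `A_i` occurs in an axiom. -/
def occursA (i : ℕ) : KAxiom → Prop
  | KAxiom.assertGE _ C _ => occursC i C
  | KAxiom.assertLE _ C _ => occursC i C
  | KAxiom.roleGE _ _ _ _ => False
  | KAxiom.gci C D _ => occursC i C ∨ occursC i D

/-- Replace every occurrence of the atomic concept `A_i` by `C` in a concept. -/
def substC (i : ℕ) (C : MConcept) : MConcept → MConcept
  | MConcept.atom i' => if i' = i then C else MConcept.atom i'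
  | MConcept.top => MConcept.top
  | MConcept.bot => MConcept.bot
  | MConcept.conj D E => MConcept.conj (substC i C D) (substC i C E)
  | MConcept.disj D E => MConcept.disj (substC i C D) (substC i C E)
  | MConcept.neg D => MConcept.neg (substC i C D)
  | MConcept.all j D => MConcept.all j (substC i C D)
  | MConcept.ex j D => MConcept.ex j (substC i C D)

/-- Replace every occurrence of the atomic concept `A_i` by `C` in an axiom. -/
def substAx (i : ℕ) (C : MConcept) : KAxiom → KAxiom
  | KAxiom.assertGE a E q => KAxiom.assertGE a (substC i C E) q
  | KAxiom.assertLE a E q => KAxiom.assertLE a (substC i C E) q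
  | KAxiom.roleGE a b j q => KAxiom.roleGE a b j q
  | KAxiom.gci D E q => KAxiom.gci (substC i C D) (substC i C E) q

/-- An axiom is an assertion axiom (i.e. not a GCI). -/
def isAssertion : KAxiom → Prop
  | KAxiom.gci _ _ _ => False
  | _ => True


section Aux

lemma lukT_mem {x y : ℝ} (hx : x ∈ Set.Icc (0:ℝ) 1) (hy : y ∈ Set.Icc (0:ℝ) 1) :
    lukT x y ∈ Set.Icc (0:ℝ) 1 := by
  obtain ⟨hx0, hx1⟩ := hx; obtain ⟨hy0, hy1⟩ := hy
  refine ⟨le_max_right _ _, max_le (by linarith) (by linarith)⟩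

lemma lukS_mem {x y : ℝ} (hx : x ∈ Set.Icc (0:ℝ) 1) (hy : y ∈ Set.Icc (0:ℝ) 1) :
    lukS x y ∈ Set.Icc (0:ℝ) 1 := by
  obtain ⟨hx0, hx1⟩ := hx; obtain ⟨hy0, hy1⟩ := hy
  refine ⟨le_min (by linarith) (by linarith), min_le_right _ _⟩

lemma lukImp_mem {x y : ℝ} (hx : x ∈ Set.Icc (0:ℝ) 1) (hy : y ∈ Set.Icc (0:ℝ) 1) :
    lukImp x y ∈ Set.Icc (0:ℝ) 1 := by
  obtain ⟨hx0, hx1⟩ := hx; obtain ⟨hy0, hy1⟩ := hy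
  refine ⟨le_min (by linarith) (by linarith), min_le_right _ _⟩

lemma bddBelow_lukImp (I : Interp) (j : ℕ) (x : I.Δ) (D : MConcept)
    (h : ∀ y, lval I D y ∈ Set.Icc (0:ℝ) 1) :
    BddBelow (Set.range fun y => lukImp (I.role j x y) (lval I D y)) := by
  refine ⟨0, ?_⟩
  rintro _ ⟨z, rfl⟩
  exact (lukImp_mem (I.role_mem j x z) (h z)).1

lemma bddAbove_lukT (I : Interp) (j : ℕ) (x : I.Δ) (D : MConcept)
    (h : ∀ y, lval I D y ∈ Set.Icc (0:ℝ) 1) :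
    BddAbove (Set.range fun y => lukT (I.role j x y) (lval I D y)) := by
  refine ⟨1, ?_⟩
  rintro _ ⟨z, rfl⟩
  exact (lukT_mem (I.role_mem j x z) (h z)).2

lemma lval_mem (I : Interp) (E : MConcept) : ∀ x, lval I E x ∈ Set.Icc (0:ℝ) 1 := by
  induction E with
  | atom i' => exact fun x => I.atom_mem i' x
  | top => intro x; simp [lval]
  | bot => intro x; simp [lval]
  | conj D E ihD ihE => intro x; exact lukT_mem (ihD x) (ihE x)
  | disj D E ihD ihE => intro x; exact lukS_mem (ihD x) (ihE x)
  | neg D ih =>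
      intro x; obtain ⟨h0, h1⟩ := ih x
      simp only [lval, Set.mem_Icc]; constructor <;> linarith
  | all j D ih =>
      intro x
      have hI : Nonempty I.Δ := I.nonempty
      simp only [lval]
      constructor
      · exact le_ciInf fun y => (lukImp_mem (I.role_mem j x y) (ih y)).1
      · obtain ⟨y⟩ := hI
        exact ciInf_le_of_le (bddBelow_lukImp I j x D ih) y
          (lukImp_mem (I.role_mem j x y) (ih y)).2
  | ex j D ih =>
      intro x
      have hI : Nonempty I.Δ := I.nonempty
      simp only [lval]
      constructor
      · obtain ⟨y⟩ := hI
        exact le_ciSup_of_le (bddAbove_lukT I j x D ih) y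
          (lukT_mem (I.role_mem j x y) (ih y)).1
      · exact ciSup_le fun y => (lukT_mem (I.role_mem j x y) (ih y)).2

lemma lsub_le (I : Interp) (C D : MConcept) (x : I.Δ) :
    lsub I C D ≤ lukImp (lval I C x) (lval I D x) := by
  refine ciInf_le ⟨0, ?_⟩ x
  rintro _ ⟨z, rfl⟩
  exact (lukImp_mem (lval_mem I C z) (lval_mem I D z)).1

/-- If the two GCIs hold with degree 1 then `A_i` and `C` coincide pointwise. -/
lemma atom_eq_of_gci (I : Interp) (i : ℕ) (C : MConcept)
    (h1 : (1:ℝ) ≤ lsub I (MConcept.atom i) C)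
    (h2 : (1:ℝ) ≤ lsub I C (MConcept.atom i)) :
    ∀ x, I.atom i x = lval I C x := by
  intro x
  have e1 := le_trans h1 (lsub_le I (MConcept.atom i) C x)
  have e2 := le_trans h2 (lsub_le I C (MConcept.atom i) x)
  simp only [lukImp, lval, le_min_iff] at e1 e2
  have := e1.1; have := e2.1
  linarith

/-- If `A_i` and `C` coincide pointwise, substitution does not change values. -/
lemma lval_subst_self (I : Interp) (i : ℕ) (C : MConcept)
    (h : ∀ x, I.atom i x = lval I C x) (E : MConcept) :
    ∀ x, lval I (substC i C E) x = lval I E x := by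
  induction E with
  | atom i' =>
      intro x
      by_cases hii : i' = i
      · subst hii; simp [substC, lval, h x]
      · simp [substC, hii, lval]
  | top => intro x; simp [substC]
  | bot => intro x; simp [substC]
  | conj D E ihD ihE => intro x; simp [substC, lval, ihD x, ihE x]
  | disj D E ihD ihE => intro x; simp [substC, lval, ihD x, ihE x]
  | neg D ih => intro x; simp [substC, lval, ih x]
  | all j D ih =>
      intro x; simp only [substC, lval]
      exact iInf_congr fun y => by rw [ih y]
  | ex j D ih =>
      intro x; simp only [substC, lval]
      exact iSup_congr fun y => by rw [ih y]

/-- The interpretation obtained by redefining `A_i` to the value of `C`. -/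
noncomputable def modifyI (I : Interp) (i : ℕ) (C : MConcept) : Interp where
  Δ := I.Δ
  nonempty := I.nonempty
  atom := fun i' x => if i' = i then lval I C x else I.atom i' x
  role := I.role
  ind := I.ind
  atom_mem := by
    intro i' x
    by_cases hii : i' = i
    · simpa [hii] using lval_mem I C x
    · simpa [hii] using I.atom_mem i' x
  role_mem := I.role_mem

lemma lval_modify_not_occurs (I : Interp) (i : ℕ) (C : MConcept) (E : MConcept)
    (hE : ¬ occursC i E) : ∀ x : I.Δ, lval (modifyI I i C) E x = lval I E x := by
  induction E with
  | atom i' =>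
      intro x
      have hne : ¬ (i = i') := hE
      show (if i' = i then lval I C x else I.atom i' x) = I.atom i' x
      exact if_neg fun h => hne h.symm
  | top => intro x; simp [lval]
  | bot => intro x; simp [lval]
  | conj D E ihD ihE =>
      intro x
      have h1 : ¬ occursC i D := fun h => hE (Or.inl h)
      have h2 : ¬ occursC i E := fun h => hE (Or.inr h)
      simp [lval, ihD h1 x, ihE h2 x]
  | disj D E ihD ihE =>
      intro x
      have h1 : ¬ occursC i D := fun h => hE (Or.inl h)
      have h2 : ¬ occursC i E := fun h => hE (Or.inr h)
      simp [lval, ihD h1 x, ihE h2 x]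
  | neg D ih => intro x; simp [lval, ih hE x]
  | all j D ih =>
      intro x; simp only [lval]
      exact iInf_congr fun y => by rw [ih hE y]; rfl
  | ex j D ih =>
      intro x; simp only [lval]
      exact iSup_congr fun y => by rw [ih hE y]; rfl

lemma lval_modify_subst (I : Interp) (i : ℕ) (C : MConcept) (hC : ¬ occursC i C)
    (E : MConcept) : ∀ x : I.Δ, lval (modifyI I i C) E x = lval I (substC i C E) x := by
  induction E with
  | atom i' =>
      intro x
      by_cases hii : i' = i
      · subst hii
        simp [lval, modifyI, substC, lval_modify_not_occurs I i' C C hC x]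
      · simp [lval, modifyI, substC, hii]
  | top => intro x; simp [lval, substC]
  | bot => intro x; simp [lval, substC]
  | conj D E ihD ihE => intro x; simp [lval, substC, ihD x, ihE x]
  | disj D E ihD ihE => intro x; simp [lval, substC, ihD x, ihE x]
  | neg D ih => intro x; simp [lval, substC, ih x]
  | all j D ih =>
      intro x; simp only [lval, substC]
      exact iInf_congr fun y => by rw [ih y]; rfl
  | ex j D ih =>
      intro x; simp only [lval, substC]
      exact iSup_congr fun y => by rw [ih y]; rfl

lemma fwd_dir (i : ℕ) (C : MConcept) (𝒜 : Finset KAxiom)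
    (h𝒜 : ∀ ax ∈ 𝒜, isAssertion ax) (I : Interp)
    (hsat : lsatKB I (insert (KAxiom.gci (MConcept.atom i) C 1)
        (insert (KAxiom.gci C (MConcept.atom i) 1) 𝒜))) :
    lsatKB I (𝒜.image (substAx i C)) := by
  have h1 : (1:ℝ) ≤ lsub I (MConcept.atom i) C := by
    have := hsat _ (Finset.mem_insert_self _ _)
    simpa [lsat] using this
  have h2 : (1:ℝ) ≤ lsub I C (MConcept.atom i) := by
    have := hsat _ (Finset.mem_insert_of_mem (Finset.mem_insert_self _ _))
    simpa [lsat] using this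
  have heq := atom_eq_of_gci I i C h1 h2
  intro ax' hax'
  obtain ⟨ax, hax, rfl⟩ := Finset.mem_image.mp hax'
  have hs : lsat I ax :=
    hsat ax (Finset.mem_insert_of_mem (Finset.mem_insert_of_mem hax))
  cases ax with
  | assertGE a E q =>
      simpa [lsat, substAx, lval_subst_self I i C heq E] using hs
  | assertLE a E q =>
      simpa [lsat, substAx, lval_subst_self I i C heq E] using hs
  | roleGE a b j q => simpa [lsat, substAx] using hs
  | gci D E q => exact absurd (h𝒜 _ hax) (by simp [isAssertion])

lemma bwd_dir (i : ℕ) (C : MConcept) (hC : ¬ occursC i C) (𝒜 : Finset KAxiom)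
    (I : Interp) (hsat : lsatKB I (𝒜.image (substAx i C))) :
    lsatKB (modifyI I i C) (insert (KAxiom.gci (MConcept.atom i) C 1)
        (insert (KAxiom.gci C (MConcept.atom i) 1) 𝒜)) := by
  have hatomC : ∀ x : I.Δ, lval (modifyI I i C) (MConcept.atom i) x
      = lval (modifyI I i C) C x := by
    intro x
    rw [lval_modify_subst I i C hC (MConcept.atom i) x,
        lval_modify_not_occurs I i C C hC x]
    simp [substC]
  have hsub : ∀ (D E : MConcept),
      (∀ x : I.Δ, lval (modifyI I i C) D x = lval (modifyI I i C) E x) →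
      (1:ℝ) ≤ lsub (modifyI I i C) D E := by
    intro D E hDE
    have : ∀ x : I.Δ, lukImp (lval (modifyI I i C) D x) (lval (modifyI I i C) E x) = 1 := by
      intro x; rw [hDE x]; simp [lukImp]
    haveI hne : Nonempty (modifyI I i C).Δ := I.nonempty
    exact le_ciInf fun x => le_of_eq (this x).symm
  intro ax hax
  rcases Finset.mem_insert.mp hax with rfl | hax
  · simpa [lsat] using hsub _ _ hatomC
  rcases Finset.mem_insert.mp hax with rfl | hax
  · simpa [lsat] using hsub _ _ fun x => (hatomC x).symm
  have hs : lsat I (substAx i C ax) := hsat _ (Finset.mem_image_of_mem _ hax)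
  cases ax with
  | assertGE a E q =>
      show (q:ℝ) ≤ lval (modifyI I i C) E (I.ind a)
      rw [lval_modify_subst I i C hC E]
      simpa [lsat, substAx, lval_modify_subst I i C hC E] using hs
  | assertLE a E q =>
      show lval (modifyI I i C) E (I.ind a) ≤ (q:ℝ)
      rw [lval_modify_subst I i C hC E]
      simpa [lsat, substAx, lval_modify_subst I i C hC E] using hs
  | roleGE a b j q => simpa [lsat, substAx, modifyI] using hs
  | gci D E q =>
      have : (q:ℝ) ≤ lsub I (substC i C D) (substC i C E) := by
        simpa [lsat, substAx] using hs
      show (q:ℝ) ≤ lsub (modifyI I i C) D E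
      have heq : lsub (modifyI I i C) D E = lsub I (substC i C D) (substC i C E) :=
        iInf_congr fun x => by
          rw [lval_modify_subst I i C hC D x, lval_modify_subst I i C hC E x]
      rw [heq]; exact this

end Aux

theorem stmt17 (i : ℕ) (C : MConcept) (hC : ¬ occursC i C)
    (𝒜 : Finset KAxiom) (h𝒜 : ∀ ax ∈ 𝒜, isAssertion ax)
    (h𝒜b : ∀ ax ∈ 𝒜, axBounded ax) :
    ((∃ I : Interp, lsatKB I
        (insert (KAxiom.gci (MConcept.atom i) C 1)
          (insert (KAxiom.gci C (MConcept.atom i) 1) 𝒜))) ↔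
     (∃ I : Interp, lsatKB I (𝒜.image (substAx i C)))) ∧
    ((∃ I : Interp, Finite I.Δ ∧ lsatKB I
        (insert (KAxiom.gci (MConcept.atom i) C 1)
          (insert (KAxiom.gci C (MConcept.atom i) 1) 𝒜))) ↔
     (∃ I : Interp, Finite I.Δ ∧ lsatKB I (𝒜.image (substAx i C)))) := by
  constructor
  · constructor
    · rintro ⟨I, hI⟩
      exact ⟨I, fwd_dir i C 𝒜 h𝒜 I hI⟩
    · rintro ⟨I, hI⟩
      exact ⟨modifyI I i C, bwd_dir i C hC 𝒜 I hI⟩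
  · constructor
    · rintro ⟨I, hfin, hI⟩
      exact ⟨I, hfin, fwd_dir i C 𝒜 h𝒜 I hI⟩
    · rintro ⟨I, hfin, hI⟩
      exact ⟨modifyI I i C, hfin, bwd_dir i C hC 𝒜 I hI⟩
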